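/- Let x = (x₁,...,x_m) be a random vector with independent entries satisfying E xⱼ = 0, E xⱼ² = 1, E xⱼ⁴ = γ₄ⱼ, and let u, v ∈ ℝᵐ be deterministic orthonormal vectors (‖u‖=‖v‖=1, uᵀv = 0). Then E[((uᵀx)² − 1)·((vᵀx)² − 1)] = Σⱼ (γ₄ⱼ − 3)·uⱼ²·vⱼ². -/

import Mathlib

open MeasureTheory ProbabilityTheory
open scoped ENNReal

section Aux

variable {Ω : Type*} [MeasurableSpace Ω] {μ : Measure Ω}

lemma iIndepFun_congr_ae {ι : Type*} {β : ι → Type*} {mβ : ∀ i, MeasurableSpace (β i)}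
    {f g : ∀ i, Ω → β i} (hf : iIndepFun f μ)
    (h : ∀ i, f i =ᵐ[μ] g i) : iIndepFun g μ := by
  rw [iIndepFun_iff_measure_inter_preimage_eq_mul] at hf ⊢
  intro S sets hsets
  have h1 : ∀ i, μ (g i ⁻¹' sets i) = μ (f i ⁻¹' sets i) := fun i =>
    measure_congr ((h i).mono fun ω hω => by
      show (g i ω ∈ sets i) = (f i ω ∈ sets i)
      rw [hω])
  have hae : ∀ᵐ ω ∂μ, ∀ i ∈ S, f i ω = g i ω :=
    (Filter.eventually_all_finset S).2 fun i _ => h i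
  have h2 : ((⋂ i ∈ S, g i ⁻¹' sets i) : Set Ω) =ᵐ[μ] (⋂ i ∈ S, f i ⁻¹' sets i) := by
    filter_upwards [hae] with ω hω
    show (ω ∈ ⋂ i ∈ S, g i ⁻¹' sets i) = (ω ∈ ⋂ i ∈ S, f i ⁻¹' sets i)
    simp only [Set.mem_iInter, Set.mem_preimage]
    exact propext (forall₂_congr fun i hi => by rw [hω i hi])
  rw [measure_congr h2, hf S hsets]
  exact Finset.prod_congr rfl fun i _ => (h1 i).symm

end Aux

section Main

variable {Ω : Type*} [MeasurableSpace Ω] {μ : Measure Ω} [IsProbabilityMeasure μ]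

lemma covariance_quadratic_forms_meas (m : ℕ) (X : Fin m → Ω → ℝ) (γ : Fin m → ℝ)
    (hmeas : ∀ j, Measurable (X j))
    (hindep : iIndepFun X μ)
    (hL4 : ∀ j, MemLp (X j) 4 μ)
    (hmean : ∀ j, ∫ ω, X j ω ∂μ = 0)
    (hvar : ∀ j, ∫ ω, (X j ω) ^ 2 ∂μ = 1)
    (hkurt : ∀ j, ∫ ω, (X j ω) ^ 4 ∂μ = γ j)
    (u v : Fin m → ℝ) (hu : ∑ j, (u j) ^ 2 = 1) (hv : ∑ j, (v j) ^ 2 = 1)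
    (huv : ∑ j, u j * v j = 0) :
    ∫ ω, ((∑ j, u j * X j ω) ^ 2 - 1) * ((∑ j, v j * X j ω) ^ 2 - 1) ∂μ =
      ∑ j, (γ j - 3) * (u j) ^ 2 * (v j) ^ 2 := by
  have asm : ∀ j, AEStronglyMeasurable (X j) μ := fun j => (hmeas j).aestronglyMeasurable
  -- lone-variable vanishing
  have lone : ∀ a b c d : Fin m, a ≠ d → b ≠ d → c ≠ d →
      ∫ ω, (X a ω * X b ω * X c ω) * X d ω ∂μ = 0 := by
    intro a b c d had hbd hcd
    have hdisj : Disjoint ({a, b, c} : Finset (Fin m)) {d} := by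
      simp only [Finset.disjoint_singleton_right, Finset.mem_insert, Finset.mem_singleton]
      push_neg
      exact ⟨had.symm, hbd.symm, hcd.symm⟩
    have hbase := iIndepFun.indepFun_finset ({a, b, c} : Finset (Fin m)) {d} hdisj hindep hmeas
    have ha : a ∈ ({a, b, c} : Finset (Fin m)) := by simp
    have hb : b ∈ ({a, b, c} : Finset (Fin m)) := by simp
    have hc : c ∈ ({a, b, c} : Finset (Fin m)) := by simp
    have hd : d ∈ ({d} : Finset (Fin m)) := by simp
    have hφ : Measurable (fun g : ({a, b, c} : Finset (Fin m)) → ℝ =>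
        g ⟨a, ha⟩ * g ⟨b, hb⟩ * g ⟨c, hc⟩) :=
      ((measurable_pi_apply (⟨a, ha⟩ : ({a, b, c} : Finset (Fin m)))).mul
        (measurable_pi_apply (⟨b, hb⟩ : ({a, b, c} : Finset (Fin m))))).mul (measurable_pi_apply (⟨c, hc⟩ : ({a, b, c} : Finset (Fin m))))
    have hψ : Measurable (fun g : ({d} : Finset (Fin m)) → ℝ => g ⟨d, hd⟩) :=
      measurable_pi_apply _
    have hI : IndepFun (fun ω => X a ω * X b ω * X c ω) (X d) μ := hbase.comp hφ hψ
    rw [hI.integral_fun_mul_eq_mul_integral ((((hmeas a).mul (hmeas b)).mul (hmeas c)).aestronglyMeasurable)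
      (asm d), hmean d, mul_zero]
  -- second moments
  have m2 : ∀ i j : Fin m, ∫ ω, X i ω * X j ω ∂μ = if i = j then 1 else 0 := by
    intro i j
    rcases eq_or_ne i j with rfl | hij
    · rw [if_pos rfl]
      simp_rw [← pow_two]
      exact hvar i
    · rw [if_neg hij]
      rw [(hindep.indepFun hij).integral_fun_mul_eq_mul_integral (asm i) (asm j), hmean i, zero_mul]
  -- squared pairs
  have m22 : ∀ i k : Fin m, i ≠ k → ∫ ω, (X i ω) ^ 2 * (X k ω) ^ 2 ∂μ = 1 := by
    intro i k hik
    have hI : IndepFun (fun ω => (X i ω) ^ 2) (fun ω => (X k ω) ^ 2) μ :=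
      (hindep.indepFun hik).comp (measurable_id.pow_const 2) (measurable_id.pow_const 2)
    rw [hI.integral_fun_mul_eq_mul_integral ((hmeas i).pow_const 2).aestronglyMeasurable
      ((hmeas k).pow_const 2).aestronglyMeasurable, hvar i, hvar k, one_mul]
  -- fourth moments
  have m4 : ∀ i j k l : Fin m, ∫ ω, X i ω * X j ω * X k ω * X l ω ∂μ =
      (if i = j then (1:ℝ) else 0) * (if k = l then 1 else 0)
      + (if i = k then (1:ℝ) else 0) * (if j = l then 1 else 0)
      + (if i = l then (1:ℝ) else 0) * (if j = k then 1 else 0)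
      + (if i = j then (1:ℝ) else 0) * (if j = k then 1 else 0)
        * (if k = l then 1 else 0) * (γ i - 3) := by
    intro i j k l
    rcases eq_or_ne i j with rfl | hij
    · rcases eq_or_ne i k with rfl | hik
      · rcases eq_or_ne i l with rfl | hil
        · have e : (∫ ω, X i ω * X i ω * X i ω * X i ω ∂μ) = ∫ ω, (X i ω) ^ 4 ∂μ :=
            integral_congr_ae (Filter.Eventually.of_forall fun ω => by ring)
          rw [e, hkurt i]
          simp only [if_pos rfl]
          norm_num
        · have e : (∫ ω, X i ω * X i ω * X i ω * X l ω ∂μ)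
              = ∫ ω, (X i ω * X i ω * X i ω) * X l ω ∂μ := rfl
          rw [e, lone i i i l hil hil hil]
          simp [hil]
      · rcases eq_or_ne k l with rfl | hkl
        · have e : (∫ ω, X i ω * X i ω * X k ω * X k ω ∂μ)
              = ∫ ω, (X i ω) ^ 2 * (X k ω) ^ 2 ∂μ :=
            integral_congr_ae (Filter.Eventually.of_forall fun ω => by ring)
          rw [e, m22 i k hik]
          simp [hik]
        · rcases eq_or_ne i l with rfl | hil
          · have e : (∫ ω, X i ω * X i ω * X k ω * X i ω ∂μ)
                = ∫ ω, (X i ω * X i ω * X i ω) * X k ω ∂μ :=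
              integral_congr_ae (Filter.Eventually.of_forall fun ω => by ring)
            rw [e, lone i i i k hik hik hik]
            simp [hik, hik.symm, hkl]
          · have e : (∫ ω, X i ω * X i ω * X k ω * X l ω ∂μ)
                = ∫ ω, (X i ω * X i ω * X k ω) * X l ω ∂μ := rfl
            rw [e, lone i i k l hil hil hkl]
            simp [hik, hil, hkl]
    · rcases eq_or_ne i k with rfl | hik
      · rcases eq_or_ne j l with rfl | hjl
        · have e : (∫ ω, X i ω * X j ω * X i ω * X j ω ∂μ)
              = ∫ ω, (X i ω) ^ 2 * (X j ω) ^ 2 ∂μ :=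
            integral_congr_ae (Filter.Eventually.of_forall fun ω => by ring)
          rw [e, m22 i j hij]
          simp [hij]
        · rcases eq_or_ne i l with rfl | hil
          · have e : (∫ ω, X i ω * X j ω * X i ω * X i ω ∂μ)
                = ∫ ω, (X i ω * X i ω * X i ω) * X j ω ∂μ :=
              integral_congr_ae (Filter.Eventually.of_forall fun ω => by ring)
            rw [e, lone i i i j hij hij hij]
            simp [hij, hij.symm, hjl]
          · have e : (∫ ω, X i ω * X j ω * X i ω * X l ω ∂μ)
                = ∫ ω, (X i ω * X j ω * X i ω) * X l ω ∂μ := rfl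
            rw [e, lone i j i l hil hjl hil]
            simp [hij, hjl, hil]
      · rcases eq_or_ne i l with rfl | hil
        · rcases eq_or_ne j k with rfl | hjk
          · have e : (∫ ω, X i ω * X j ω * X j ω * X i ω ∂μ)
                = ∫ ω, (X i ω) ^ 2 * (X j ω) ^ 2 ∂μ :=
              integral_congr_ae (Filter.Eventually.of_forall fun ω => by ring)
            rw [e, m22 i j hij]
            simp [hij, hik]
          · have e : (∫ ω, X i ω * X j ω * X k ω * X i ω ∂μ)
                = ∫ ω, (X i ω * X k ω * X i ω) * X j ω ∂μ :=
              integral_congr_ae (Filter.Eventually.of_forall fun ω => by ring)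
            rw [e, lone i k i j hij hjk.symm hij]
            simp [hij, hik, hjk]
        · have e : (∫ ω, X i ω * X j ω * X k ω * X l ω ∂μ)
              = ∫ ω, (X j ω * X k ω * X l ω) * X i ω ∂μ :=
            integral_congr_ae (Filter.Eventually.of_forall fun ω => by ring)
          rw [e, lone j k l i hij.symm hik.symm hil.symm]
          simp [hij, hik, hil]
  -- integrability
  have h2 : ∀ i j : Fin m, MemLp (fun ω => X i ω * X j ω) 2 μ := fun i j =>
    (hL4 j).smul (hL4 i) (hpqr := ⟨by
      simp only [← one_div]; rw [ENNReal.div_add_div_same, ENNReal.div_eq_div_iff] <;> norm_num⟩)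
  have hInt2 : ∀ i j : Fin m, Integrable (fun ω => X i ω * X j ω) μ := fun i j =>
    (h2 i j).integrable (by norm_num)
  have hInt4 : ∀ i j k l : Fin m, Integrable (fun ω => X i ω * X j ω * X k ω * X l ω) μ := by
    intro i j k l
    have h1 : MemLp (fun ω => (X i ω * X j ω) * (X k ω * X l ω)) 1 μ :=
      (h2 k l).smul (h2 i j) (hpqr := ⟨by simp [ENNReal.inv_two_add_inv_two]⟩)
    exact (memLp_one_iff_integrable.1 h1).congr
      (Filter.Eventually.of_forall fun ω => by ring)
  -- pointwise expansion
  have hrw : (fun ω => ((∑ j, u j * X j ω) ^ 2 - 1) * ((∑ j, v j * X j ω) ^ 2 - 1))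
      = fun ω => (∑ i, ∑ j, ∑ k, ∑ l,
            (u i * u j * (v k * v l)) * (X i ω * X j ω * X k ω * X l ω))
          - (∑ i, ∑ j, (u i * u j) * (X i ω * X j ω))
          - (∑ i, ∑ j, (v i * v j) * (X i ω * X j ω)) + 1 := by
    funext ω
    have e1 : (∑ j, u j * X j ω) ^ 2 = ∑ i, ∑ j, (u i * u j) * (X i ω * X j ω) := by
      rw [sq, Finset.sum_mul_sum]
      exact Finset.sum_congr rfl fun i _ => Finset.sum_congr rfl fun j _ => by ring
    have e2 : (∑ j, v j * X j ω) ^ 2 = ∑ i, ∑ j, (v i * v j) * (X i ω * X j ω) := by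
      rw [sq, Finset.sum_mul_sum]
      exact Finset.sum_congr rfl fun i _ => Finset.sum_congr rfl fun j _ => by ring
    have e3 : (∑ i, ∑ j, (u i * u j) * (X i ω * X j ω))
        * (∑ k, ∑ l, (v k * v l) * (X k ω * X l ω))
        = ∑ i, ∑ j, ∑ k, ∑ l,
            (u i * u j * (v k * v l)) * (X i ω * X j ω * X k ω * X l ω) := by
      rw [Finset.sum_mul_sum]
      refine Finset.sum_congr rfl fun i _ => ?_
      rw [show (∑ k, ((∑ j, (u i * u j) * (X i ω * X j ω))
            * (∑ l, (v k * v l) * (X k ω * X l ω))))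
          = ∑ k, ∑ j, ∑ l,
              (u i * u j * (v k * v l)) * (X i ω * X j ω * X k ω * X l ω) from
        Finset.sum_congr rfl fun k _ => by
          rw [Finset.sum_mul_sum]
          exact Finset.sum_congr rfl fun j _ => Finset.sum_congr rfl fun l _ => by ring]
      exact Finset.sum_comm
    calc ((∑ j, u j * X j ω) ^ 2 - 1) * ((∑ j, v j * X j ω) ^ 2 - 1)
        = (∑ j, u j * X j ω) ^ 2 * (∑ j, v j * X j ω) ^ 2
          - (∑ j, u j * X j ω) ^ 2 - (∑ j, v j * X j ω) ^ 2 + 1 := by ring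
      _ = _ := by rw [e1, e2, e3]
  rw [hrw]
  have IntBig : Integrable (fun ω => ∑ i, ∑ j, ∑ k, ∑ l,
      (u i * u j * (v k * v l)) * (X i ω * X j ω * X k ω * X l ω)) μ :=
    integrable_finset_sum _ fun i _ => integrable_finset_sum _ fun j _ =>
      integrable_finset_sum _ fun k _ => integrable_finset_sum _ fun l _ =>
        (hInt4 i j k l).const_mul _
  have IntU : Integrable (fun ω => ∑ i, ∑ j, (u i * u j) * (X i ω * X j ω)) μ :=
    integrable_finset_sum _ fun i _ => integrable_finset_sum _ fun j _ =>
      (hInt2 i j).const_mul _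
  have IntV : Integrable (fun ω => ∑ i, ∑ j, (v i * v j) * (X i ω * X j ω)) μ :=
    integrable_finset_sum _ fun i _ => integrable_finset_sum _ fun j _ =>
      (hInt2 i j).const_mul _
  have IBU : Integrable (fun ω => (∑ i, ∑ j, ∑ k, ∑ l,
      (u i * u j * (v k * v l)) * (X i ω * X j ω * X k ω * X l ω))
      - (∑ i, ∑ j, (u i * u j) * (X i ω * X j ω))) μ := IntBig.sub IntU
  have IBUV : Integrable (fun ω => (∑ i, ∑ j, ∑ k, ∑ l,
      (u i * u j * (v k * v l)) * (X i ω * X j ω * X k ω * X l ω))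
      - (∑ i, ∑ j, (u i * u j) * (X i ω * X j ω))
      - (∑ i, ∑ j, (v i * v j) * (X i ω * X j ω))) μ := IBU.sub IntV
  rw [integral_add IBUV (integrable_const 1),
    integral_sub IBU IntV, integral_sub IntBig IntU, integral_const]
  have eU : ∫ ω, ∑ i, ∑ j, (u i * u j) * (X i ω * X j ω) ∂μ = 1 := by
    rw [integral_finset_sum _ fun i _ =>
      integrable_finset_sum _ fun j _ => (hInt2 i j).const_mul _]
    have h : ∀ i : Fin m, ∫ ω, ∑ j, (u i * u j) * (X i ω * X j ω) ∂μ = u i ^ 2 := by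
      intro i
      rw [integral_finset_sum _ fun j _ => (hInt2 i j).const_mul _,
        show (∑ j, ∫ ω, (u i * u j) * (X i ω * X j ω) ∂μ)
          = ∑ j, (u i * u j) * (if i = j then 1 else 0) from
        Finset.sum_congr rfl fun j _ => by rw [integral_const_mul, m2 i j]]
      simp [mul_ite, pow_two]
    rw [Finset.sum_congr rfl fun i _ => h i, hu]
  have eV : ∫ ω, ∑ i, ∑ j, (v i * v j) * (X i ω * X j ω) ∂μ = 1 := by
    rw [integral_finset_sum _ fun i _ =>
      integrable_finset_sum _ fun j _ => (hInt2 i j).const_mul _]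
    have h : ∀ i : Fin m, ∫ ω, ∑ j, (v i * v j) * (X i ω * X j ω) ∂μ = v i ^ 2 := by
      intro i
      rw [integral_finset_sum _ fun j _ => (hInt2 i j).const_mul _,
        show (∑ j, ∫ ω, (v i * v j) * (X i ω * X j ω) ∂μ)
          = ∑ j, (v i * v j) * (if i = j then 1 else 0) from
        Finset.sum_congr rfl fun j _ => by rw [integral_const_mul, m2 i j]]
      simp [mul_ite, pow_two]
    rw [Finset.sum_congr rfl fun i _ => h i, hv]
  have eBig : ∫ ω, (∑ i, ∑ j, ∑ k, ∑ l,
      (u i * u j * (v k * v l)) * (X i ω * X j ω * X k ω * X l ω)) ∂μ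
      = ∑ j, (γ j - 3) * u j ^ 2 * v j ^ 2 + 1 := by
    have step : ∫ ω, (∑ i, ∑ j, ∑ k, ∑ l,
        (u i * u j * (v k * v l)) * (X i ω * X j ω * X k ω * X l ω)) ∂μ
        = ∑ i, ∑ j, ∑ k, ∑ l, (u i * u j * (v k * v l)) *
            ((if i = j then (1:ℝ) else 0) * (if k = l then 1 else 0)
            + (if i = k then (1:ℝ) else 0) * (if j = l then 1 else 0)
            + (if i = l then (1:ℝ) else 0) * (if j = k then 1 else 0)
            + (if i = j then (1:ℝ) else 0) * (if j = k then 1 else 0)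
              * (if k = l then 1 else 0) * (γ i - 3)) := by
      rw [integral_finset_sum _ fun i _ => integrable_finset_sum _ fun j _ =>
        integrable_finset_sum _ fun k _ => integrable_finset_sum _ fun l _ =>
          (hInt4 i j k l).const_mul _]
      refine Finset.sum_congr rfl fun i _ => ?_
      rw [integral_finset_sum _ fun j _ => integrable_finset_sum _ fun k _ =>
        integrable_finset_sum _ fun l _ => (hInt4 i j k l).const_mul _]
      refine Finset.sum_congr rfl fun j _ => ?_
      rw [integral_finset_sum _ fun k _ => integrable_finset_sum _ fun l _ =>
        (hInt4 i j k l).const_mul _]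
      refine Finset.sum_congr rfl fun k _ => ?_
      rw [integral_finset_sum _ fun l _ => (hInt4 i j k l).const_mul _]
      refine Finset.sum_congr rfl fun l _ => ?_
      rw [integral_const_mul, m4 i j k l]
    rw [step]
    have A : (∑ x : Fin m, ∑ x1 : Fin m, u x * u x * (v x1 * v x1)) = 1 := by
      rw [← Finset.sum_mul_sum]
      simp_rw [← pow_two]
      rw [hu, hv, one_mul]
    have B : (∑ x : Fin m, ∑ x1 : Fin m, u x * u x1 * (v x * v x1)) = 0 := by
      have h : ∀ x x1 : Fin m, u x * u x1 * (v x * v x1) = u x * v x * (u x1 * v x1) :=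
        fun _ _ => by ring
      simp_rw [h]
      rw [← Finset.sum_mul_sum, huv, zero_mul]
    have C : (∑ x : Fin m, ∑ x1 : Fin m, u x * u x1 * (v x1 * v x)) = 0 := by
      have h : ∀ x x1 : Fin m, u x * u x1 * (v x1 * v x) = u x * v x * (u x1 * v x1) :=
        fun _ _ => by ring
      simp_rw [h]
      rw [← Finset.sum_mul_sum, huv, zero_mul]
    have D : (∑ x : Fin m, u x * u x * (v x * v x) * (γ x - 3))
        = ∑ j, (γ j - 3) * u j ^ 2 * v j ^ 2 :=
      Finset.sum_congr rfl fun x _ => by ring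
    simp only [mul_add, Finset.sum_add_distrib, mul_ite, ite_mul, mul_one, one_mul, mul_zero,
      zero_mul, Finset.sum_ite_irrel, Finset.sum_ite_eq, Finset.sum_ite_eq', Finset.mem_univ,
      if_true, Finset.sum_const_zero, add_zero, zero_add]
    rw [A, B, C, D]
    ring
  rw [eU, eV, eBig]
  simp

end Main

/-- Covariance of the centered quadratic forms `(uᵀx)² - 1` and `(vᵀx)² - 1` for orthonormal
deterministic vectors `u, v`: `E[((uᵀx)² - 1)((vᵀx)² - 1)] = Σⱼ (γ₄ⱼ - 3) uⱼ² vⱼ²`. -/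
theorem covariance_quadratic_forms (m : ℕ) (Ω : Type*) [MeasurableSpace Ω]
    (μ : Measure Ω) [IsProbabilityMeasure μ]
    (X : Fin m → Ω → ℝ) (γ : Fin m → ℝ)
    (hindep : iIndepFun X μ)
    (hL4 : ∀ j, MemLp (X j) 4 μ)
    (hmean : ∀ j, ∫ ω, X j ω ∂μ = 0)
    (hvar : ∀ j, ∫ ω, (X j ω) ^ 2 ∂μ = 1)
    (hkurt : ∀ j, ∫ ω, (X j ω) ^ 4 ∂μ = γ j)
    (u v : Fin m → ℝ) (hu : ∑ j, (u j) ^ 2 = 1) (hv : ∑ j, (v j) ^ 2 = 1)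
    (huv : ∑ j, u j * v j = 0) :
    ∫ ω, ((∑ j, u j * X j ω) ^ 2 - 1) * ((∑ j, v j * X j ω) ^ 2 - 1) ∂μ =
      ∑ j, (γ j - 3) * (u j) ^ 2 * (v j) ^ 2 := by
  have hasm : ∀ j, AEStronglyMeasurable (X j) μ := fun j => (hL4 j).aestronglyMeasurable
  set Y : Fin m → Ω → ℝ := fun j => (hasm j).mk (X j) with hYdef
  have hYmeas : ∀ j, Measurable (Y j) := fun j => (hasm j).stronglyMeasurable_mk.measurable
  have hXY : ∀ j, X j =ᵐ[μ] Y j := fun j => (hasm j).ae_eq_mk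
  have hYindep : iIndepFun Y μ := iIndepFun_congr_ae hindep hXY
  have hYL4 : ∀ j, MemLp (Y j) 4 μ := fun j => (hL4 j).ae_eq (hXY j)
  have hYmean : ∀ j, ∫ ω, Y j ω ∂μ = 0 := fun j => by
    rw [← integral_congr_ae (hXY j)]; exact hmean j
  have hYvar : ∀ j, ∫ ω, (Y j ω) ^ 2 ∂μ = 1 := fun j => by
    have he : (fun ω => (X j ω) ^ 2) =ᵐ[μ] fun ω => (Y j ω) ^ 2 :=
      (hXY j).mono fun ω hω => by simp only [hω]
    rw [← integral_congr_ae he]; exact hvar j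
  have hYkurt : ∀ j, ∫ ω, (Y j ω) ^ 4 ∂μ = γ j := fun j => by
    have he : (fun ω => (X j ω) ^ 4) =ᵐ[μ] fun ω => (Y j ω) ^ 4 :=
      (hXY j).mono fun ω hω => by simp only [hω]
    rw [← integral_congr_ae he]; exact hkurt j
  have hmain := covariance_quadratic_forms_meas m Y γ hYmeas hYindep hYL4 hYmean hYvar hYkurt
    u v hu hv huv
  rw [← hmain]
  apply integral_congr_ae
  have hall : ∀ᵐ ω ∂μ, ∀ j, X j ω = Y j ω := ae_all_iff.2 hXY
  filter_upwards [hall] with ω hω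
  simp only [hω]
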